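/- Let R be a discrete valuation ring with uniformizer π, f ∈ R[X] monic of degree M with f(X) ≡ X^M mod π. Let g_(1),...,g_(n) ∈ R[X] be monic of degrees 1 ≤ m_(1) ≤ ... ≤ m_(n) with Res(g_(1),...,g_(n)) ≠ 0, t := val_π(Res(g_(1),...,g_(n))), t' := t − ∑_{j∈[1,n−1]}((n−j)m_(j) − 1), and s ≥ t + t' + 1 with f(X) ≡ ∏_k g_(k)(X) mod π^s. Then there exist monic polynomials g̃_(1),...,g̃_(n) ∈ R[X] with g̃_(k) ≡ g_(k) mod π^{s−t'} for all k and f(X) ≡ ∏_k g̃_(k)(X) mod π^{2(s−t')}; moreover val_π(Res(g̃_(1),...,g̃_(n))) = t for any such tuple. -/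

import Mathlib

open Polynomial Finset

open Matrix

/-- The global column position of an index in the block-structured resultant matrix. -/
def resPos {n : ℕ} {m : Fin n → ℕ} (q : (k : Fin n) × Fin (m k)) : ℕ :=
  (∑ j ∈ Finset.univ.filter (fun j => j < q.1), m j) + (q.2 : ℕ)

/-- The matrix `A(g_(1), …, g_(n))` whose block of `deg g_(k)` rows consists of the
successively shifted coefficient rows of `∏_{j ≠ k} g_(j)`. -/
noncomputable def resMatrix {R : Type*} [CommRing R] {n : ℕ} (g : Fin n → Polynomial R) :
    Matrix ((k : Fin n) × Fin ((g k).natDegree)) ((k : Fin n) × Fin ((g k).natDegree)) R :=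
  fun p q =>
    if (p.2 : ℕ) ≤ resPos q then
      (∏ j ∈ Finset.univ.erase p.1, g j).coeff (resPos q - (p.2 : ℕ))
    else 0

/-- The generalized resultant `Res(g_(1), …, g_(n)) = det A(g_(1), …, g_(n))`. -/
noncomputable def genRes {R : Type*} [CommRing R] {n : ℕ} (g : Fin n → Polynomial R) : R :=
  (resMatrix g).det

section HSAux

variable {R : Type*} [CommRing R]

lemma hs_dvd_coeff {c : R} {p : R[X]} (h : C c ∣ p) (i : ℕ) : c ∣ p.coeff i :=
  (Polynomial.C_dvd_iff_dvd_coeff c p).mp h i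

lemma hs_natDegree_eq {c : R} {p q : R[X]} (hp : p.Monic) (hq : q.Monic)
    (h : C c ∣ p - q) (hc : ¬ IsUnit c) : p.natDegree = q.natDegree := by
  by_contra hne
  rcases Nat.lt_or_ge p.natDegree q.natDegree with hlt | hge
  · have h1 := hs_dvd_coeff h q.natDegree
    rw [Polynomial.coeff_sub, Polynomial.coeff_eq_zero_of_natDegree_lt hlt,
      hq.coeff_natDegree, zero_sub] at h1
    exact hc (isUnit_of_dvd_one (dvd_neg.mp h1))
  · have hlt : q.natDegree < p.natDegree := lt_of_le_of_ne hge (fun e => hne e.symm)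
    have h1 := hs_dvd_coeff h p.natDegree
    rw [Polynomial.coeff_sub, Polynomial.coeff_eq_zero_of_natDegree_lt hlt,
      hp.coeff_natDegree, sub_zero] at h1
    exact hc (isUnit_of_dvd_one h1)

lemma hs_prod_sub_prod {c : R[X]} {ι : Type*} [DecidableEq ι] (T : Finset ι) (p q : ι → R[X])
    (h : ∀ k ∈ T, c ∣ (p k - q k)) : c ∣ (∏ k ∈ T, p k - ∏ k ∈ T, q k) := by
  induction T using Finset.induction with
  | empty => simp
  | insert _ _ hk =>
    rename_i k T ih
    rw [prod_insert hk, prod_insert hk]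
    have h1 := ih (fun j hj => h j (mem_insert_of_mem hj))
    have h2 := h k (mem_insert_self _ _)
    have e : p k * ∏ j ∈ T, p j - q k * ∏ j ∈ T, q j
        = p k * (∏ j ∈ T, p j - ∏ j ∈ T, q j) + (p k - q k) * ∏ j ∈ T, q j := by ring
    rw [e]
    exact dvd_add (h1.mul_left _) (h2.mul_right _)

lemma hs_det_sub_det {c : R} {ι : Type*} [DecidableEq ι] [Fintype ι] (A B : Matrix ι ι R)
    (h : ∀ i j, c ∣ A i j - B i j) : c ∣ A.det - B.det := by
  classical
  set I := Ideal.span {c}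
  have hAB : A.map (Ideal.Quotient.mk I) = B.map (Ideal.Quotient.mk I) := by
    ext i j
    simp only [Matrix.map_apply]
    rw [Ideal.Quotient.eq]
    exact Ideal.mem_span_singleton.mpr (h i j)
  have hdet := congrArg Matrix.det hAB
  rw [← RingHom.mapMatrix_apply, ← RingHom.mapMatrix_apply, ← RingHom.map_det,
    ← RingHom.map_det] at hdet
  exact Ideal.mem_span_singleton.mp (Ideal.Quotient.eq.mp hdet)

lemma hs_det_dvd_of_col {ι : Type*} [DecidableEq ι] [Fintype ι] (A : Matrix ι ι R)
    (d : ι → R) (S : Finset ι) (h : ∀ i, ∀ j ∈ S, d j ∣ A i j) :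
    (∏ j ∈ S, d j) ∣ A.det := by
  rw [Matrix.det_apply']
  refine Finset.dvd_sum (fun σ _ => ?_)
  refine Dvd.dvd.mul_left ?_ _
  calc (∏ j ∈ S, d j) ∣ ∏ j ∈ S, A (σ j) j :=
        Finset.prod_dvd_prod_of_dvd _ _ (fun j hj => h _ j hj)
    _ ∣ ∏ j, A (σ j) j := Finset.prod_dvd_prod_of_subset _ _ _ (S.subset_univ)

lemma hs_adj_dvd {ι : Type*} [DecidableEq ι] [Fintype ι] (A : Matrix ι ι R) (d : ι → R)
    (h : ∀ i j, d j ∣ A i j) (i j : ι) :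
    (∏ q ∈ Finset.univ.erase i, d q) ∣ A.adjugate i j := by
  rw [Matrix.adjugate_apply]
  refine hs_det_dvd_of_col _ d _ (fun p q hq => ?_)
  rcases eq_or_ne p j with rfl | hp
  · rw [Matrix.updateRow_self, Pi.single_eq_of_ne (Finset.ne_of_mem_erase hq)]
    exact dvd_zero _
  · rw [Matrix.updateRow_ne hp]
    exact h p q

lemma hs_prod_add {ι : Type*} [DecidableEq ι] (T : Finset ι) (p δ : ι → R[X]) (c : R[X])
    (h : ∀ k ∈ T, c ∣ δ k) :
    c ^ 2 ∣ (∏ k ∈ T, (p k + δ k) - ∏ k ∈ T, p k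
      - ∑ k ∈ T, δ k * ∏ j ∈ T.erase k, p j) := by
  induction T using Finset.induction with
  | empty => simp
  | insert _ _ hk =>
    rename_i k T ih
    have hE := ih (fun j hj => h j (mem_insert_of_mem hj))
    have hPQ : c ∣ (∏ j ∈ T, (p j + δ j) - ∏ j ∈ T, p j) :=
      hs_prod_sub_prod T _ _ (fun j hj => by
        simpa using h j (mem_insert_of_mem hj))
    have hδk := h k (mem_insert_self _ _)
    rw [prod_insert hk, prod_insert hk, Finset.sum_insert hk, Finset.erase_insert hk]
    have hsum : ∑ j ∈ T, δ j * ∏ i ∈ (insert k T).erase j, p i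
        = p k * ∑ j ∈ T, δ j * ∏ i ∈ T.erase j, p i := by
      rw [Finset.mul_sum]
      refine Finset.sum_congr rfl (fun j hj => ?_)
      have hjk : j ≠ k := fun e => hk (e ▸ hj)
      rw [Finset.erase_insert_of_ne (Ne.symm hjk),
        Finset.prod_insert (fun hmem => hk (Finset.mem_of_mem_erase hmem))]
      ring
    rw [hsum]
    have key : (p k + δ k) * ∏ j ∈ T, (p j + δ j) - p k * ∏ j ∈ T, p j
        - (δ k * ∏ j ∈ T, p j + p k * ∑ j ∈ T, δ j * ∏ i ∈ T.erase j, p i)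
        = p k * (∏ j ∈ T, (p j + δ j) - ∏ j ∈ T, p j - ∑ j ∈ T, δ j * ∏ i ∈ T.erase j, p i)
          + δ k * (∏ j ∈ T, (p j + δ j) - ∏ j ∈ T, p j) := by ring
    rw [key]
    refine dvd_add (hE.mul_left _) ?_
    have h2 : c ^ 2 = c * c := by ring
    rw [h2]
    exact mul_dvd_mul hδk hPQ

end HSAux

section HSMinSigma
variable {n : ℕ}

/-- The minimal sum of `m` over subsets of `T` of size `T.card - a`. -/
def hsMin (m : Fin n → ℕ) (T : Finset (Fin n)) (a : ℕ) : ℕ :=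
  (T.powersetCard (T.card - a)).inf'
    (Finset.powersetCard_nonempty.mpr (Nat.sub_le _ _)) (fun U => ∑ j ∈ U, m j)

lemma hsMin_le {m : Fin n → ℕ} {T U : Finset (Fin n)} {a : ℕ}
    (hU : U ∈ T.powersetCard (T.card - a)) : hsMin m T a ≤ ∑ j ∈ U, m j :=
  Finset.inf'_le _ hU

lemma hsMin_exists (m : Fin n → ℕ) (T : Finset (Fin n)) (a : ℕ) :
    ∃ U ∈ T.powersetCard (T.card - a), hsMin m T a = ∑ j ∈ U, m j := by
  obtain ⟨U, hU, hEq⟩ := Finset.exists_mem_eq_inf'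
    (Finset.powersetCard_nonempty.mpr (Nat.sub_le T.card a)) (fun U => ∑ j ∈ U, m j)
  exact ⟨U, hU, hEq⟩

lemma hsMin_empty (m : Fin n → ℕ) (a : ℕ) : hsMin m ∅ a = 0 := by
  have h : (∅ : Finset (Fin n)) ∈ Finset.powersetCard ((∅ : Finset (Fin n)).card - a) ∅ := by
    simp
  have h1 := hsMin_le (m := m) h
  simpa using h1

lemma hsMin_le_erase {m : Fin n → ℕ} {T : Finset (Fin n)} {k : Fin n} (hk : k ∉ T) (a : ℕ)
    (ha : 1 ≤ a) :
    hsMin m (insert k T) a ≤ hsMin m T (a - 1) := by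
  obtain ⟨U, hU, hEq⟩ := hsMin_exists m T (a - 1)
  rw [hEq]
  rw [Finset.mem_powersetCard] at hU
  refine hsMin_le (Finset.mem_powersetCard.mpr ⟨hU.1.trans (Finset.subset_insert _ _), ?_⟩)
  rw [hU.2, Finset.card_insert_of_notMem hk]
  omega

lemma hsMin_le_insert {m : Fin n → ℕ} {T : Finset (Fin n)} {k : Fin n} (hk : k ∉ T) (a : ℕ)
    (ha : a ≤ T.card) :
    hsMin m (insert k T) a ≤ m k + hsMin m T a := by
  obtain ⟨U, hU, hEq⟩ := hsMin_exists m T a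
  rw [hEq]
  rw [Finset.mem_powersetCard] at hU
  have hkU : k ∉ U := fun h => hk (hU.1 h)
  have hmem : insert k U ∈ (insert k T).powersetCard ((insert k T).card - a) := by
    refine Finset.mem_powersetCard.mpr ⟨Finset.insert_subset_insert _ hU.1, ?_⟩
    rw [Finset.card_insert_of_notMem hkU, Finset.card_insert_of_notMem hk, hU.2]
    omega
  have := hsMin_le (m := m) hmem
  rwa [Finset.sum_insert hkU] at this

end HSMinSigma

section HSCoeffProd
variable {R : Type*} [CommRing R] {n : ℕ}

lemma hs_coeff_prod_dvd (π : R) (g : Fin n → R[X]) (hg : ∀ j, (g j).Monic)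
    (hco : ∀ j, ∀ b < (g j).natDegree, π ∣ (g j).coeff b) (T : Finset (Fin n)) :
    ∀ (a b : ℕ), b < hsMin (fun k => (g k).natDegree) T a →
      π ^ (a + 1) ∣ (∏ j ∈ T, g j).coeff b := by
  set m : Fin n → ℕ := fun k => (g k).natDegree with hm
  induction T using Finset.induction with
  | empty => intro a b hb; rw [hsMin_empty] at hb; omega
  | insert _ _ hk =>
    rename_i k T ih
    intro a b hb
    rcases Nat.lt_or_ge T.card a with hbig | ha
    · exfalso
      have h0 : (insert k T).card - a = 0 := by
        rw [Finset.card_insert_of_notMem hk]; omega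
      have h1 : hsMin m (insert k T) a ≤ ∑ j ∈ (∅ : Finset (Fin n)), m j :=
        hsMin_le (Finset.mem_powersetCard.mpr ⟨Finset.empty_subset _, by simp [h0]⟩)
      simp at h1
      omega
    rw [Finset.prod_insert hk, Polynomial.coeff_mul]
    refine Finset.dvd_sum (fun x hx => ?_)
    rw [Finset.HasAntidiagonal.mem_antidiagonal] at hx
    rcases Nat.lt_trichotomy x.1 (m k) with hlt | heq | hgt
    · have h1 : π ∣ (g k).coeff x.1 := hco k x.1 hlt
      rcases Nat.eq_zero_or_pos a with rfl | hapos
      · simpa using h1.mul_right _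
      · have h2 : π ^ a ∣ (∏ j ∈ T, g j).coeff x.2 := by
          have hstep := hsMin_le_erase (m := m) hk a hapos
          have hx2 : x.2 < hsMin m T (a - 1) := by omega
          have h3 := ih (a - 1) x.2 hx2
          rwa [Nat.sub_add_cancel hapos] at h3
        have h4 : π ^ (a + 1) = π * π ^ a := by ring
        rw [h4]
        exact mul_dvd_mul h1 h2
    · have hstep := hsMin_le_insert (m := m) hk a ha
      have h2 : x.2 < hsMin m T a := by omega
      exact (ih a x.2 h2).mul_left _
    · rw [Polynomial.coeff_eq_zero_of_natDegree_lt hgt]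
      simp

end HSCoeffProd

section HSSorted
variable {n : ℕ}

lemma hs_strictMono_le {r : ℕ} (f : Fin r → Fin n) (hf : StrictMono f) (i : Fin r) :
    (i : ℕ) ≤ (f i : ℕ) := by
  obtain ⟨v, hv⟩ := i
  induction v with
  | zero => exact Nat.zero_le _
  | succ v ihv =>
    have hv' : v < r := by omega
    have h1 := ihv hv'
    have h2 : f ⟨v, hv'⟩ < f ⟨v + 1, hv⟩ := hf (by simp [Fin.lt_def])
    rw [Fin.lt_def] at h2
    have h1' : v ≤ ((f ⟨v, hv'⟩ : Fin n) : ℕ) := by simpa using h1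
    simp only [Fin.val_mk] at h2 ⊢
    omega

lemma hs_sorted_sum_le {m : Fin n → ℕ} (hsort : Monotone m) (U : Finset (Fin n)) :
    ∑ j ∈ Finset.univ.filter (fun j : Fin n => (j : ℕ) < U.card), m j ≤ ∑ j ∈ U, m j := by
  classical
  set r := U.card with hr
  have hrn : r ≤ n := by
    have := Finset.card_le_univ U
    simpa using this
  have hUsum : ∑ j ∈ U, m j = ∑ i : Fin r, m (U.orderEmbOfFin hr.symm i) := by
    refine (Finset.sum_bij (fun i _ => U.orderEmbOfFin hr.symm i) ?_ ?_ ?_ ?_).symm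
    · intro i _; exact Finset.orderEmbOfFin_mem U hr.symm i
    · intro i _ j _ h; exact (U.orderEmbOfFin hr.symm).injective h
    · intro x hx
      have hxr : x ∈ Set.range (U.orderEmbOfFin hr.symm) := by
        rw [Finset.range_orderEmbOfFin]; exact hx
      obtain ⟨i, hi⟩ := hxr
      exact ⟨i, Finset.mem_univ i, hi⟩
    · intro i _; rfl
  have hfil : ∑ j ∈ Finset.univ.filter (fun j : Fin n => (j : ℕ) < r), m j
      = ∑ i : Fin r, m (Fin.castLE hrn i) := by
    refine (Finset.sum_bij (fun i _ => Fin.castLE hrn i) ?_ ?_ ?_ ?_).symm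
    · intro i _
      simp only [Finset.mem_filter, Finset.mem_univ, true_and, Fin.coe_castLE]
      exact i.2
    · intro i _ j _ h
      exact Fin.castLE_injective hrn h
    · intro x hx
      simp only [Finset.mem_filter, Finset.mem_univ, true_and] at hx
      exact ⟨⟨(x : ℕ), hx⟩, Finset.mem_univ _, by ext; simp⟩
    · intro i _; rfl
  rw [hUsum, hfil]
  refine Finset.sum_le_sum (fun i _ => ?_)
  refine hsort ?_
  have := hs_strictMono_le _ (U.orderEmbOfFin hr.symm).strictMono i
  rw [Fin.le_def]
  simpa using this

end HSSorted

section HSResPos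
variable {n : ℕ} {m : Fin n → ℕ}

lemma hs_filter_lt_insert (k : Fin n) :
    insert k (Finset.univ.filter (fun j : Fin n => j < k))
      = Finset.univ.filter (fun j : Fin n => j ≤ k) := by
  ext j
  simp only [Finset.mem_insert, Finset.mem_filter, Finset.mem_univ, true_and]
  constructor
  · rintro (rfl | h)
    · exact le_refl _
    · exact le_of_lt h
  · intro h
    rcases eq_or_lt_of_le h with h' | h'
    · exact Or.inl (by exact_mod_cast h')
    · exact Or.inr h'

lemma hs_blocksum_add (k : Fin n) :
    (∑ j ∈ Finset.univ.filter (fun j : Fin n => j < k), m j) + m k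
      = ∑ j ∈ Finset.univ.filter (fun j : Fin n => j ≤ k), m j := by
  rw [← hs_filter_lt_insert, Finset.sum_insert (by simp)]
  ring

lemma hs_blocksum_le {k k' : Fin n} (h : k < k') :
    (∑ j ∈ Finset.univ.filter (fun j : Fin n => j < k), m j) + m k
      ≤ ∑ j ∈ Finset.univ.filter (fun j : Fin n => j < k'), m j := by
  rw [hs_blocksum_add]
  refine Finset.sum_le_sum_of_subset ?_
  intro j hj
  simp only [Finset.mem_filter, Finset.mem_univ, true_and] at hj ⊢
  exact lt_of_le_of_lt hj h

lemma hs_resPos_lt (q : (k : Fin n) × Fin (m k)) : resPos q < ∑ j, m j := by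
  have h1 : resPos q < (∑ j ∈ Finset.univ.filter (fun j : Fin n => j < q.1), m j) + m q.1 := by
    unfold resPos
    have := q.2.2
    omega
  refine lt_of_lt_of_le h1 ?_
  rw [hs_blocksum_add]
  exact Finset.sum_le_sum_of_subset (Finset.subset_univ _)

lemma hs_resPos_inj : Function.Injective (resPos : ((k : Fin n) × Fin (m k)) → ℕ) := by
  rintro ⟨k, i⟩ ⟨k', i'⟩ h
  unfold resPos at h
  simp only at h
  have hkk : k = k' := by
    rcases lt_trichotomy k k' with hlt | heq | hgt
    · exfalso
      have h2 := hs_blocksum_le (m := m) hlt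
      have := i.2
      omega
    · exact heq
    · exfalso
      have h2 := hs_blocksum_le (m := m) hgt
      have := i'.2
      omega
  subst hkk
  have : (i : ℕ) = (i' : ℕ) := by omega
  simp only [Sigma.mk.inj_iff, heq_eq_eq, true_and]
  exact Fin.ext this

lemma hs_resPos_surj {b : ℕ} (hb : b < ∑ j, m j) :
    ∃ q : (k : Fin n) × Fin (m k), resPos q = b := by
  classical
  have hcard : (Finset.range (∑ j, m j)).card
      ≤ (Finset.univ : Finset ((k : Fin n) × Fin (m k))).card := by
    rw [Finset.card_range, Finset.card_univ, Fintype.card_sigma]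
    simp
  have hsurj := Finset.surj_on_of_inj_on_of_card_le
    (s := (Finset.univ : Finset ((k : Fin n) × Fin (m k))))
    (t := Finset.range (∑ j, m j))
    (fun q _ => resPos q)
    (fun q _ => Finset.mem_range.mpr (hs_resPos_lt q))
    (fun q q' _ _ h => hs_resPos_inj h) hcard
  obtain ⟨q, _, hq⟩ := hsurj b (Finset.mem_range.mpr hb)
  exact ⟨q, hq.symm⟩

lemma hs_sum_resPos {Mo : Type*} [AddCommMonoid Mo] (F : ℕ → Mo) :
    ∑ q : (k : Fin n) × Fin (m k), F (resPos q) = ∑ b ∈ Finset.range (∑ j, m j), F b := by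
  classical
  refine Finset.sum_bij (fun q _ => resPos q) ?_ ?_ ?_ ?_
  · intro q _; exact Finset.mem_range.mpr (hs_resPos_lt q)
  · intro q _ q' _ h; exact hs_resPos_inj h
  · intro b hb
    obtain ⟨q, hq⟩ := hs_resPos_surj (Finset.mem_range.mp hb)
    exact ⟨q, Finset.mem_univ _, hq⟩
  · intro q _; rfl

end HSResPos

section HSResid
variable {R : Type*} [CommRing R] [IsDomain R] {n : ℕ}

lemma hs_coeff_dvd_of_resid (π : R) (hπ : Irreducible π) [IsPrincipalIdealRing R]
    {M : ℕ} (g : Fin n → R[X]) (hmonic : ∀ k, (g k).Monic)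
    (hprod : C π ∣ ((∏ k, g k) - X ^ M)) :
    ∀ k, ∀ b < (g k).natDegree, π ∣ (g k).coeff b := by
  classical
  set I := Ideal.span {π} with hI
  haveI hmax : I.IsMaximal := PrincipalIdealRing.isMaximal_of_irreducible hπ
  let φ : R →+* R ⧸ I := Ideal.Quotient.mk I
  have hmap0 : ∀ p : R[X], C π ∣ p → p.map φ = 0 := by
    intro p hp
    ext i
    rw [Polynomial.coeff_map, Polynomial.coeff_zero]
    rw [Ideal.Quotient.eq_zero_iff_mem, hI, Ideal.mem_span_singleton]
    exact (Polynomial.C_dvd_iff_dvd_coeff π p).mp hp i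
  have hprodφ : ∏ k, (g k).map φ = X ^ M := by
    have h0 := hmap0 _ hprod
    rw [Polynomial.map_sub, Polynomial.map_prod, Polynomial.map_pow, Polynomial.map_X,
      sub_eq_zero] at h0
    exact h0
  intro k b hb
  have hdvd : (g k).map φ ∣ X ^ M := by
    rw [← hprodφ]
    exact Finset.dvd_prod_of_mem _ (Finset.mem_univ k)
  obtain ⟨i, _, hassoc⟩ := (dvd_prime_pow Polynomial.prime_X M).mp hdvd
  have heqX : (g k).map φ = X ^ i :=
    Polynomial.eq_of_monic_of_associated ((hmonic k).map φ) (Polynomial.monic_X_pow i) hassoc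
  have hdegmap : ((g k).map φ).natDegree = (g k).natDegree := (hmonic k).natDegree_map φ
  have hi : i = (g k).natDegree := by
    rw [heqX] at hdegmap
    simpa using hdegmap
  have hcoeff := congrArg (fun p => Polynomial.coeff p b) heqX
  simp only [Polynomial.coeff_map, Polynomial.coeff_X_pow] at hcoeff
  rw [if_neg (by omega)] at hcoeff
  rw [← Ideal.mem_span_singleton, ← hI, ← Ideal.Quotient.eq_zero_iff_mem]
  exact hcoeff

end HSResid

section HSGenResCongr
variable {R : Type*} [CommRing R] {n : ℕ}

lemma hs_genRes_congr (g g' : Fin n → R[X]) (c : R)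
    (hd : ∀ k, (g' k).natDegree = (g k).natDegree)
    (hcong : ∀ k, C c ∣ (g' k - g k)) : c ∣ genRes g' - genRes g := by
  classical
  let e : ((k : Fin n) × Fin ((g' k).natDegree)) ≃ ((k : Fin n) × Fin ((g k).natDegree)) :=
    Equiv.sigmaCongrRight (fun k => finCongr (hd k))
  have h1 : genRes g' = ((Matrix.reindex e e) (resMatrix g')).det := by
    rw [Matrix.det_reindex_self]; rfl
  rw [h1, genRes]
  refine hs_det_sub_det _ _ (fun p q => ?_)
  have hsymm : ∀ p : ((k : Fin n) × Fin ((g k).natDegree)),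
      e.symm p = ⟨p.1, (finCongr (hd p.1)).symm p.2⟩ := by
    intro p; rfl
  have hpos : resPos (e.symm q) = resPos q := by
    rw [hsymm]
    unfold resPos
    simp only [finCongr_symm, finCongr_apply, Fin.coe_cast]
    exact congrArg (· + (q.2 : ℕ)) (Finset.sum_congr rfl (fun j _ => hd j))
  have hentry : (Matrix.reindex e e) (resMatrix g') p q
      = (if (p.2 : ℕ) ≤ resPos q then
          (∏ j ∈ Finset.univ.erase p.1, g' j).coeff (resPos q - (p.2 : ℕ)) else 0) := by
    rw [Matrix.reindex_apply, Matrix.submatrix_apply]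
    show resMatrix g' (e.symm p) (e.symm q) = _
    unfold resMatrix
    rw [hpos, hsymm p]
    rfl
  rw [hentry]
  unfold resMatrix
  split
  · have hd2 : C c ∣ ((∏ j ∈ Finset.univ.erase p.1, g' j) - ∏ j ∈ Finset.univ.erase p.1, g j) :=
      hs_prod_sub_prod _ _ _ (fun j _ => hcong j)
    have h3 := (Polynomial.C_dvd_iff_dvd_coeff c _).mp hd2 (resPos q - (p.2 : ℕ))
    simpa [Polynomial.coeff_sub] using h3
  · simp

end HSGenResCongr

/-- **One Hensel lifting step with improved precision in the case `f ≡ X^M mod π`:**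
with `t = val_π(Res(g_(1), …, g_(n)))`, `t' = t − ∑_{j∈[1,n−1]}((n−j)m_(j) − 1)` and
`s ≥ t + t' + 1`, a factorisation `f ≡ ∏_k g_(k) mod π^s` admits monic lifts
`g̃_(k) ≡ g_(k) mod π^{s−t'}` with `f ≡ ∏_k g̃_(k) mod π^{2(s−t')}`; moreover every such
tuple satisfies `val_π(Res(g̃_(1), …, g̃_(n))) = t`. -/
theorem hensel_step_special
    {R : Type*} [CommRing R] [IsDomain R] [IsDiscreteValuationRing R]
    (π : R) (hπ : Irreducible π)
    (f : Polynomial R) (hf : f.Monic)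
    (hfX : C π ∣ (f - X ^ f.natDegree))
    {n : ℕ} (g : Fin n → Polynomial R)
    (hmonic : ∀ k, (g k).Monic) (hdeg : ∀ k, 1 ≤ (g k).natDegree)
    (hsort : Monotone fun k => (g k).natDegree)
    (hres : genRes g ≠ 0)
    (t : ℕ) (ht : π ^ t ∣ genRes g ∧ ¬ π ^ (t + 1) ∣ genRes g)
    (t' : ℕ)
    (ht' : t' = t - ∑ k ∈ Finset.univ.filter (fun k : Fin n => (k : ℕ) + 1 < n),
        ((n - ((k : ℕ) + 1)) * (g k).natDegree - 1))
    (s : ℕ) (hs : t + t' + 1 ≤ s)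
    (hcongr : C (π ^ s) ∣ (f - ∏ k, g k)) :
    (∃ g' : Fin n → Polynomial R, (∀ k, (g' k).Monic) ∧
        (∀ k, C (π ^ (s - t')) ∣ (g' k - g k)) ∧
        C (π ^ (2 * (s - t'))) ∣ (f - ∏ k, g' k)) ∧
    (∀ g' : Fin n → Polynomial R, (∀ k, (g' k).Monic) →
        (∀ k, C (π ^ (s - t')) ∣ (g' k - g k)) →
        C (π ^ (2 * (s - t'))) ∣ (f - ∏ k, g' k) →
        π ^ t ∣ genRes g' ∧ ¬ π ^ (t + 1) ∣ genRes g') := by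
  classical
  have hπ0 : π ≠ 0 := hπ.ne_zero
  have hπu : ¬ IsUnit π := hπ.not_isUnit
  set m : Fin n → ℕ := fun k => (g k).natDegree with hm
  set M : ℕ := ∑ k, m k with hMdef
  have ht'le : t' ≤ t := by rw [ht']; exact Nat.sub_le _ _
  -- Part 2 : uniqueness of the valuation of the resultant
  have part2 : ∀ g' : Fin n → Polynomial R, (∀ k, (g' k).Monic) →
      (∀ k, C (π ^ (s - t')) ∣ (g' k - g k)) →
      C (π ^ (2 * (s - t'))) ∣ (f - ∏ k, g' k) →
      π ^ t ∣ genRes g' ∧ ¬ π ^ (t + 1) ∣ genRes g' := by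
    intro g' hg'm hg'c _
    have hnu : ¬ IsUnit (π ^ (s - t')) := fun hu =>
      hπu (isUnit_of_dvd_unit (dvd_pow_self π (by omega : s - t' ≠ 0)) hu)
    have hd : ∀ k, (g' k).natDegree = (g k).natDegree :=
      fun k => hs_natDegree_eq (hg'm k) (hmonic k) (hg'c k) hnu
    obtain ⟨r, hr⟩ := hs_genRes_congr g g' (π ^ (s - t')) hd hg'c
    constructor
    · have hEq : genRes g' = genRes g + π ^ (s - t') * r := by linear_combination hr
      rw [hEq]
      exact dvd_add ht.1 ((pow_dvd_pow π (by omega)).mul_right r)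
    · intro hcon
      apply ht.2
      have hEq : genRes g = genRes g' - π ^ (s - t') * r := by linear_combination -hr
      rw [hEq]
      exact dvd_sub hcon ((pow_dvd_pow π (by omega)).mul_right r)
  refine ⟨?_, part2⟩
  -- basic degree facts
  have hprodmonic : (∏ k, g k).Monic := monic_prod_of_monic _ _ (fun k _ => hmonic k)
  have hdegprod : (∏ k, g k).natDegree = M := by
    rw [hMdef]
    exact natDegree_prod_of_monic _ _ (fun k _ => hmonic k)
  have hnus : ¬ IsUnit (π ^ s) := fun hu =>
    hπu (isUnit_of_dvd_unit (dvd_pow_self π (by omega : s ≠ 0)) hu)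
  have hfdeg : f.natDegree = M := by
    rw [hs_natDegree_eq hf hprodmonic hcongr hnus, hdegprod]
  -- the factors are congruent to powers of X mod π
  have hCdvd : C π ∣ (f - ∏ k, g k) :=
    dvd_trans (map_dvd C (dvd_pow_self π (by omega : s ≠ 0))) hcongr
  have hprodX : C π ∣ ((∏ k, g k) - X ^ M) := by
    have h1 : C π ∣ (f - X ^ M) := by rw [← hfdeg]; exact hfX
    have h2 : (∏ k, g k) - X ^ M = (f - X ^ M) - (f - ∏ k, g k) := by ring
    rw [h2]
    exact dvd_sub h1 hCdvd
  have hco : ∀ j, ∀ b < (g j).natDegree, π ∣ (g j).coeff b :=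
    hs_coeff_dvd_of_resid π hπ g hmonic hprodX
  -- the valuation profile of the columns
  set νg : ℕ → ℕ :=
    fun a => ∑ j ∈ Finset.univ.filter (fun j : Fin n => (j : ℕ) < n - 1 - a), m j with hνg
  set w : ℕ → ℕ := fun b => ((Finset.range (n - 1)).filter (fun a => b < νg a)).card with hw
  have hνganti : ∀ a a', a ≤ a' → νg a' ≤ νg a := by
    intro a a' haa
    refine Finset.sum_le_sum_of_subset ?_
    intro j hj
    simp only [Finset.mem_filter, Finset.mem_univ, true_and] at hj ⊢
    omega
  have hνgM : ∀ a, νg a ≤ M := by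
    intro a
    rw [hMdef]
    exact Finset.sum_le_sum_of_subset (Finset.filter_subset _ _)
  have hwle : ∀ b, w b ≤ n - 1 := by
    intro b
    rw [hw]
    exact le_trans (Finset.card_filter_le _ _) (le_of_eq (Finset.card_range _))
  -- column divisibility of the resultant matrix
  have hcol : ∀ p q, π ^ (w (resPos q)) ∣ resMatrix g p q := by
    rintro ⟨k, i⟩ q
    show π ^ (w (resPos q)) ∣
      (if ((i : ℕ)) ≤ resPos q then
        (∏ j ∈ Finset.univ.erase k, g j).coeff (resPos q - (i : ℕ)) else 0)
    split
    · rcases Nat.eq_zero_or_pos (w (resPos q)) with h0 | hpos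
      · rw [h0, pow_zero]; exact one_dvd _
      · set a₀ := w (resPos q) - 1 with ha₀def
        have ha₀lt : a₀ < n - 1 := by
          have := hwle (resPos q)
          omega
        have hkey : resPos q < νg a₀ := by
          by_contra hcon
          push_neg at hcon
          have hsub : (Finset.range (n - 1)).filter (fun a => resPos q < νg a)
              ⊆ Finset.range a₀ := by
            intro a ha
            rw [Finset.mem_filter, Finset.mem_range] at ha
            rw [Finset.mem_range]
            by_contra hge
            push_neg at hge
            have := hνganti a₀ a hge
            omega
          have hcard := Finset.card_le_card hsub
          rw [Finset.card_range] at hcard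
          have hcard' : w (resPos q) ≤ a₀ := hcard
          omega
        have hνmin : νg a₀ ≤ hsMin m (Finset.univ.erase k) a₀ := by
          obtain ⟨U, hU, hEq⟩ := hsMin_exists m (Finset.univ.erase k) a₀
          rw [hEq]
          rw [Finset.mem_powersetCard] at hU
          have hcardU : U.card = n - 1 - a₀ := by
            rw [hU.2, Finset.card_erase_of_mem (Finset.mem_univ k), Finset.card_univ,
              Fintype.card_fin]
          have hs1 := hs_sorted_sum_le (m := m) hsort U
          rw [hcardU] at hs1
          exact hs1
        have hble : resPos q - (i : ℕ) < hsMin m (Finset.univ.erase k) a₀ := by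
          have hsub := Nat.sub_le (resPos q) (i : ℕ)
          omega
        have hdvd := hs_coeff_prod_dvd π g hmonic hco (Finset.univ.erase k) a₀ _ hble
        have ha₀1 : a₀ + 1 = w (resPos q) := by omega
        rwa [ha₀1] at hdvd
    · exact dvd_zero _
  -- the total column valuation
  set W : ℕ := ∑ a ∈ Finset.range (n - 1), νg a with hW
  have hsumw : ∑ q : (k : Fin n) × Fin (m k), w (resPos q) = W := by
    rw [hs_sum_resPos (m := m) w]
    have h1 : ∀ b, w b = ∑ a ∈ Finset.range (n - 1), if b < νg a then 1 else 0 := by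
      intro b
      rw [hw]
      exact Finset.card_filter _ _
    calc ∑ b ∈ Finset.range (∑ j, m j), w b
        = ∑ b ∈ Finset.range M, ∑ a ∈ Finset.range (n - 1), if b < νg a then 1 else 0 := by
          rw [← hMdef]
          exact Finset.sum_congr rfl (fun b _ => h1 b)
      _ = ∑ a ∈ Finset.range (n - 1), ∑ b ∈ Finset.range M, if b < νg a then 1 else 0 :=
          Finset.sum_comm
      _ = ∑ a ∈ Finset.range (n - 1), νg a := by
          refine Finset.sum_congr rfl (fun a _ => ?_)
          rw [← Finset.sum_filter]
          have hfil : (Finset.range M).filter (fun b => b < νg a) = Finset.range (νg a) := by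
            ext b
            simp only [Finset.mem_filter, Finset.mem_range]
            have := hνgM a
            omega
          rw [hfil]
          simp
      _ = W := hW.symm
  have hdetdvd : π ^ W ∣ genRes g := by
    have h1 := hs_det_dvd_of_col (resMatrix g) (fun q => π ^ (w (resPos q))) Finset.univ
      (fun p q _ => hcol p q)
    rw [Finset.prod_pow_eq_pow_sum] at h1
    rw [genRes]
    have h2 : ∑ q : (k : Fin n) × Fin ((g k).natDegree), w (resPos q) = W := hsumw
    rwa [h2] at h1
  have hWt : W ≤ t := by
    by_contra hWt
    exact ht.2 (dvd_trans (pow_dvd_pow π (by omega)) hdetdvd)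
  have hn1W : n - 1 ≤ W := by
    have hterm : ∀ a ∈ Finset.range (n - 1), 1 ≤ νg a := by
      intro a ha
      rw [Finset.mem_range] at ha
      have h0n : 0 < n := by omega
      have h0 : (⟨0, h0n⟩ : Fin n) ∈ Finset.univ.filter
          (fun j : Fin n => (j : ℕ) < n - 1 - a) := by
        simp only [Finset.mem_filter, Finset.mem_univ, true_and]
        omega
      calc 1 ≤ m ⟨0, h0n⟩ := hdeg _
        _ ≤ νg a := Finset.single_le_sum (fun i _ => Nat.zero_le _) h0
    calc n - 1 = ∑ _a ∈ Finset.range (n - 1), 1 := by simp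
      _ ≤ W := Finset.sum_le_sum hterm
  set D : ℕ := W - (n - 1) with hD
  -- identify the defect `t - t'` with `D`
  have hWclosed : W = ∑ k : Fin n, (n - 1 - (k : ℕ)) * m k := by
    rw [hW]
    calc ∑ a ∈ Finset.range (n - 1), νg a
        = ∑ a ∈ Finset.range (n - 1), ∑ j : Fin n,
            if (j : ℕ) < n - 1 - a then m j else 0 := by
          refine Finset.sum_congr rfl (fun a _ => ?_)
          rw [hνg]
          exact (Finset.sum_filter _ _)
      _ = ∑ j : Fin n, ∑ a ∈ Finset.range (n - 1), if (j : ℕ) < n - 1 - a then m j else 0 :=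
          Finset.sum_comm
      _ = ∑ j : Fin n, (n - 1 - (j : ℕ)) * m j := by
          refine Finset.sum_congr rfl (fun j _ => ?_)
          rw [← Finset.sum_filter]
          have hfil : (Finset.range (n - 1)).filter (fun a => (j : ℕ) < n - 1 - a)
              = Finset.range (n - 1 - (j : ℕ)) := by
            ext a
            simp only [Finset.mem_filter, Finset.mem_range]
            omega
          rw [hfil, Finset.sum_const, Finset.card_range, smul_eq_mul]
  have hcardfil : (Finset.univ.filter (fun k : Fin n => (k : ℕ) + 1 < n)).card = n - 1 := by
    rw [← Finset.card_range (n - 1)]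
    refine Finset.card_bij (fun k _ => (k : ℕ)) ?_ ?_ ?_
    · intro k hk
      simp only [Finset.mem_filter, Finset.mem_univ, true_and] at hk
      rw [Finset.mem_range]
      show (k : ℕ) < n - 1
      omega
    · intro k _ k' _ h
      exact Fin.ext h
    · intro b hb
      rw [Finset.mem_range] at hb
      refine ⟨⟨b, by omega⟩, ?_, rfl⟩
      simp only [Finset.mem_filter, Finset.mem_univ, true_and]
      omega
  have hsum_ht' : ∑ k ∈ Finset.univ.filter (fun k : Fin n => (k : ℕ) + 1 < n),
      ((n - ((k : ℕ) + 1)) * m k - 1) = D := by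
    have hterm1 : ∀ k ∈ Finset.univ.filter (fun k : Fin n => (k : ℕ) + 1 < n),
        1 ≤ (n - ((k : ℕ) + 1)) * m k := by
      intro k hk
      simp only [Finset.mem_filter, Finset.mem_univ, true_and] at hk
      have h1 : 1 ≤ n - ((k : ℕ) + 1) := by omega
      have h2 : 1 ≤ m k := hdeg k
      exact Nat.one_le_iff_ne_zero.mpr (by positivity)
    rw [Finset.sum_tsub_distrib _ hterm1]
    have hc1 : ∑ k ∈ Finset.univ.filter (fun k : Fin n => (k : ℕ) + 1 < n),
        (n - ((k : ℕ) + 1)) * m k = W := by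
      rw [hWclosed]
      rw [Finset.sum_filter]
      refine Finset.sum_congr rfl (fun k _ => ?_)
      by_cases hk : (k : ℕ) + 1 < n
      · rw [if_pos hk]
        congr 1
        omega
      · rw [if_neg hk]
        have hk' : n - 1 - (k : ℕ) = 0 := by
          have := k.2
          omega
        rw [hk']
        ring
    rw [hc1, Finset.sum_const, hcardfil, smul_eq_mul, mul_one]
  have ht'D : t' = t - D := by rw [ht', ← hsum_ht']
  have hDt : D ≤ t := le_trans (Nat.sub_le _ _) hWt
  have htt' : t' + D = t := by omega
  -- extract the cofactor polynomial h
  obtain ⟨h, hh⟩ := hcongr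
  have hCs0 : (C (π ^ s) : R[X]) ≠ 0 := by
    simpa using pow_ne_zero s hπ0
  have hhdeg : ∀ b, M ≤ b → h.coeff b = 0 := by
    intro b hb
    rcases eq_or_ne h 0 with rfl | hne
    · simp
    · have hfg0 : f - ∏ k, g k ≠ 0 := by
        rw [hh]
        exact mul_ne_zero hCs0 hne
      have hdlt : (f - ∏ k, g k).degree < f.degree := by
        refine Polynomial.degree_sub_lt ?_ hf.ne_zero ?_
        · rw [Polynomial.degree_eq_natDegree hf.ne_zero,
            Polynomial.degree_eq_natDegree hprodmonic.ne_zero, hfdeg, hdegprod]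
        · rw [hf.leadingCoeff, hprodmonic.leadingCoeff]
      have hlt1 : (f - ∏ k, g k).natDegree < f.natDegree :=
        Polynomial.natDegree_lt_natDegree hfg0 hdlt
      have hlt2 : (f - ∏ k, g k).natDegree = h.natDegree := by
        rw [hh, Polynomial.natDegree_C_mul (pow_ne_zero s hπ0)]
      refine Polynomial.coeff_eq_zero_of_natDegree_lt ?_
      omega
  -- the unit part of the resultant
  obtain ⟨e, he⟩ := ht.1
  have hπe : ¬ π ∣ e := by
    rintro ⟨r, hr⟩
    exact ht.2 ⟨r, by rw [he, hr]; ring⟩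
  have heu : IsUnit e := by
    by_contra hnu
    have hmem : e ∈ IsLocalRing.maximalIdeal R :=
      (IsLocalRing.mem_maximalIdeal e).mpr hnu
    rw [hπ.maximalIdeal_eq, Ideal.mem_span_singleton] at hmem
    exact hπe hmem
  obtain ⟨ε, hε⟩ := heu
  -- adjugate divisibility
  set A := resMatrix g with hA
  have hadj : ∀ p q, π ^ D ∣ (Matrix.adjugate Aᵀ) p q := by
    intro p q
    rw [← Matrix.adjugate_transpose]
    show π ^ D ∣ (Matrix.adjugate A) q p
    have h1 := hs_adj_dvd A (fun r => π ^ (w (resPos r))) (fun i j => hcol i j) q p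
    rw [Finset.prod_pow_eq_pow_sum] at h1
    refine dvd_trans (pow_dvd_pow π ?_) h1
    have hsplit : w (resPos q) + ∑ r ∈ Finset.univ.erase q, w (resPos r)
        = ∑ r : (k : Fin n) × Fin ((g k).natDegree), w (resPos r) :=
      Finset.add_sum_erase _ (fun r => w (resPos r)) (Finset.mem_univ q)
    have hsum2 : ∑ r : (k : Fin n) × Fin ((g k).natDegree), w (resPos r) = W := hsumw
    have := hwle (resPos q)
    omega
  -- solve the linear system exactly
  set y : ((k : Fin n) × Fin ((g k).natDegree)) → R := fun q => h.coeff (resPos q) with hy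
  have hadj' : ∀ p q, ∃ b, (Matrix.adjugate Aᵀ) p q = π ^ D * b := fun p q => hadj p q
  choose B hB using hadj'
  set Bm : Matrix ((k : Fin n) × Fin ((g k).natDegree))
      ((k : Fin n) × Fin ((g k).natDegree)) R := Matrix.of B with hBm
  have hadjB : Matrix.adjugate Aᵀ = (π ^ D) • Bm := by
    ext p q
    rw [Matrix.smul_apply, smul_eq_mul]
    exact hB p q
  set c0 : ((k : Fin n) × Fin ((g k).natDegree)) → R := Bm.mulVec y with hc0
  have hAc0 : Aᵀ.mulVec c0 = (π ^ t' * e) • y := by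
    have hcancel : (π ^ D) • Aᵀ.mulVec c0 = (π ^ D) • ((π ^ t' * e) • y) := by
      calc (π ^ D) • Aᵀ.mulVec c0
          = Aᵀ.mulVec ((π ^ D) • c0) := (Matrix.mulVec_smul _ _ _).symm
        _ = Aᵀ.mulVec (((π ^ D) • Bm).mulVec y) := by
            rw [hc0, Matrix.smul_mulVec]
        _ = Aᵀ.mulVec ((Matrix.adjugate Aᵀ).mulVec y) := by rw [← hadjB]
        _ = (Aᵀ * Matrix.adjugate Aᵀ).mulVec y := by rw [Matrix.mulVec_mulVec]
        _ = ((Aᵀ).det • (1 : Matrix _ _ R)).mulVec y := by rw [Matrix.mul_adjugate]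
        _ = (Aᵀ).det • y := by rw [Matrix.smul_mulVec, Matrix.one_mulVec]
        _ = (π ^ D) • ((π ^ t' * e) • y) := by
            rw [Matrix.det_transpose]
            have hdetA : A.det = π ^ t * e := he
            rw [hdetA, smul_smul]
            congr 1
            rw [← mul_assoc, ← pow_add]
            congr 2
            omega
    funext q
    have hq := congrFun hcancel q
    simp only [Pi.smul_apply, smul_eq_mul] at hq
    exact mul_left_cancel₀ (pow_ne_zero D hπ0) hq
  set c : ((k : Fin n) × Fin ((g k).natDegree)) → R := fun p => (↑ε⁻¹ : R) * c0 p with hc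
  have hAc : ∀ q, (∑ p, Aᵀ q p * c p) = π ^ t' * y q := by
    intro q
    have h1 : ∑ p, Aᵀ q p * c p = (↑ε⁻¹ : R) * ∑ p, Aᵀ q p * c0 p := by
      rw [Finset.mul_sum]
      exact Finset.sum_congr rfl (fun p _ => by rw [hc]; ring)
    have h2 : ∑ p, Aᵀ q p * c0 p = π ^ t' * e * y q := by
      have h3 := congrFun hAc0 q
      simpa [Matrix.mulVec, dotProduct, Pi.smul_apply, smul_eq_mul] using h3
    rw [h1, h2, ← hε]
    have h4 : (↑ε⁻¹ : R) * ↑ε = 1 := ε.inv_mul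
    linear_combination (π ^ t' * y q) * h4
  -- the correction polynomials
  set U : Fin n → R[X] :=
    fun k => ∑ i : Fin ((g k).natDegree), C (c ⟨k, i⟩) * X ^ (i : ℕ) with hU
  set g' : Fin n → R[X] := fun k => g k + C (π ^ (s - t')) * U k with hg'
  have hdegU : ∀ k, (C (π ^ (s - t')) * U k).degree < (g k).degree := by
    intro k
    have hgk0 : g k ≠ 0 := (hmonic k).ne_zero
    rw [Polynomial.degree_eq_natDegree hgk0]
    calc (C (π ^ (s - t')) * U k).degree
        ≤ (C (π ^ (s - t'))).degree + (U k).degree := Polynomial.degree_mul_le _ _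
      _ ≤ 0 + (U k).degree := add_le_add Polynomial.degree_C_le le_rfl
      _ = (U k).degree := by rw [zero_add]
      _ < ((g k).natDegree : WithBot ℕ) := by
          rw [hU]
          refine lt_of_le_of_lt (Polynomial.degree_sum_le _ _) ?_
          rw [Finset.sup_lt_iff (by exact_mod_cast WithBot.bot_lt_coe _)]
          intro i _
          exact lt_of_le_of_lt (Polynomial.degree_C_mul_X_pow_le _ _)
            (by exact_mod_cast i.2)
  have hg'monic : ∀ k, (g' k).Monic := fun k => (hmonic k).add_of_left (hdegU k)
  -- degrees of the partial products
  have hGdeg : ∀ k : Fin n, (∏ j ∈ Finset.univ.erase k, g j).natDegree = M - m k := by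
    intro k
    rw [natDegree_prod_of_monic _ _ (fun j _ => hmonic j)]
    show ∑ j ∈ Finset.univ.erase k, m j = M - m k
    have hsplit : m k + ∑ j ∈ Finset.univ.erase k, m j = ∑ j, m j :=
      Finset.add_sum_erase _ m (Finset.mem_univ k)
    omega
  have hmkM : ∀ k, m k ≤ M := by
    intro k
    rw [hMdef]
    exact Finset.single_le_sum (fun i _ => Nat.zero_le _) (Finset.mem_univ k)
  -- the key identity  ∑ U_k · ∏_{j ≠ k} g_j = π^{t'} · h
  have hcoeffsum : ∀ b, (∑ k, U k * ∏ j ∈ Finset.univ.erase k, g j).coeff b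
      = ∑ p : (k : Fin n) × Fin ((g k).natDegree),
          (if ((p.2 : ℕ)) ≤ b then
            (∏ j ∈ Finset.univ.erase p.1, g j).coeff (b - (p.2 : ℕ)) else 0) * c p := by
    intro b
    rw [Polynomial.finset_sum_coeff]
    rw [← Finset.univ_sigma_univ, Finset.sum_sigma]
    refine Finset.sum_congr rfl (fun k _ => ?_)
    rw [hU]
    rw [Finset.sum_mul, Polynomial.finset_sum_coeff]
    refine Finset.sum_congr rfl (fun i _ => ?_)
    have hcomm : C (c ⟨k, i⟩) * X ^ (i : ℕ) * ∏ j ∈ Finset.univ.erase k, g j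
        = C (c ⟨k, i⟩) * ((∏ j ∈ Finset.univ.erase k, g j) * X ^ (i : ℕ)) := by ring
    rw [hcomm, Polynomial.coeff_C_mul, Polynomial.coeff_mul_X_pow']
    split
    · ring
    · ring
  have hkey : ∑ k, U k * ∏ j ∈ Finset.univ.erase k, g j = C (π ^ t') * h := by
    ext b
    rw [hcoeffsum b, Polynomial.coeff_C_mul]
    by_cases hbM : b < M
    · obtain ⟨q, hq⟩ := hs_resPos_surj (m := m) (show b < ∑ j, m j from hMdef ▸ hbM)
      have hentry : ∀ p : (k : Fin n) × Fin ((g k).natDegree),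
          (if ((p.2 : ℕ)) ≤ b then
            (∏ j ∈ Finset.univ.erase p.1, g j).coeff (b - (p.2 : ℕ)) else 0) = Aᵀ q p := by
        intro p
        rw [Matrix.transpose_apply, hA]
        show _ = resMatrix g p q
        unfold resMatrix
        rw [hq]
      calc ∑ p : (k : Fin n) × Fin ((g k).natDegree),
              (if ((p.2 : ℕ)) ≤ b then
                (∏ j ∈ Finset.univ.erase p.1, g j).coeff (b - (p.2 : ℕ)) else 0) * c p
          = ∑ p, Aᵀ q p * c p := Finset.sum_congr rfl (fun p _ => by rw [hentry p])
        _ = π ^ t' * y q := hAc q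
        _ = π ^ t' * h.coeff b := by rw [hy]; simp only []; rw [hq]
    · rw [hhdeg b (by omega), mul_zero]
      refine Finset.sum_eq_zero (fun p _ => ?_)
      rcases p with ⟨k, i⟩
      simp only []
      split
      · have hcz : (∏ j ∈ Finset.univ.erase k, g j).coeff (b - (i : ℕ)) = 0 := by
          refine Polynomial.coeff_eq_zero_of_natDegree_lt ?_
          rw [hGdeg k]
          have hik : (i : ℕ) < m k := i.2
          have := hmkM k
          omega
        rw [hcz, zero_mul]
      · exact zero_mul _
  -- conclusion
  refine ⟨g', hg'monic, fun k => ⟨U k, by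
    show g k + C (π ^ (s - t')) * U k - g k = C (π ^ (s - t')) * U k; ring⟩, ?_⟩
  obtain ⟨E, hE⟩ := hs_prod_add Finset.univ g (fun k => C (π ^ (s - t')) * U k)
    (C (π ^ (s - t'))) (fun k _ => dvd_mul_right _ _)
  have hsumδ : ∑ k, (C (π ^ (s - t')) * U k) * ∏ j ∈ Finset.univ.erase k, g j
      = C (π ^ s) * h := by
    calc ∑ k, (C (π ^ (s - t')) * U k) * ∏ j ∈ Finset.univ.erase k, g j
        = C (π ^ (s - t')) * ∑ k, U k * ∏ j ∈ Finset.univ.erase k, g j := by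
          rw [Finset.mul_sum]
          exact Finset.sum_congr rfl (fun k _ => by ring)
      _ = C (π ^ (s - t')) * (C (π ^ t') * h) := by rw [hkey]
      _ = C (π ^ s) * h := by
          rw [← mul_assoc, ← C_mul, ← pow_add]
          congr 3
          omega
  have hCsq : (C (π ^ (s - t')) : R[X]) ^ 2 = C (π ^ (2 * (s - t'))) := by
    rw [← C_pow, ← pow_mul, Nat.mul_comm]
  have hfinal : f - ∏ k, g' k = -(C (π ^ (s - t')) ^ 2 * E) := by
    have hprodg' : ∏ k, g' k = ∏ k, (g k + C (π ^ (s - t')) * U k) := rfl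
    rw [hprodg']
    linear_combination hh - hE - hsumδ
  rw [hfinal, ← hCsq]
  exact (Dvd.intro E rfl).neg_right
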